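/- For real numbers a > b ≥ c > 0, the function f(x) = (e^{ax} - e^{bx})/(e^{cx} - 1), extended continuously at x = 0 by f(0) = (a - b)/c, is strictly convex on the real line. -/

import Mathlib

open Real Set Filter Topology

/-! Auxiliary development for `stmt4`:  strict convexity of
`x ↦ (e^{ax} - e^{bx})/(e^{cx} - 1)` for `a > b ≥ c > 0`. -/

namespace Stmt4Aux

lemma hasDerivAt_expMul (k x : ℝ) :
    HasDerivAt (fun x : ℝ => Real.exp (k*x)) (k * Real.exp (k*x)) x := by
  have h : HasDerivAt (fun x : ℝ => k * x) (k * 1) x := (hasDerivAt_id' (x := x)).const_mul k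
  have h2 := (Real.hasDerivAt_exp (k*x)).comp x h
  simp only [Function.comp_def, mul_one] at h2
  rw [mul_comm]
  exact h2

/-- key transcendental inequality: `tanh y < y` for `y > 0`, in exponential form. -/
lemma tanh_lt {y : ℝ} (hy : 0 < y) : Real.exp (2*y) - 1 < y * (Real.exp (2*y) + 1) := by
  have hde : ∀ z : ℝ, HasDerivAt (fun w : ℝ => Real.exp (2*w)) (2 * Real.exp (2*z)) z :=
    fun z => hasDerivAt_expMul 2 z
  have hdF1 : ∀ z : ℝ, HasDerivAt (fun w : ℝ => 1 + (2*w - 1) * Real.exp (2*w))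
      (4*z*Real.exp (2*z)) z := by
    intro z
    have h1 : HasDerivAt (fun w : ℝ => 2*w - 1) 2 z := by
      simpa using ((hasDerivAt_id' (x := z)).const_mul 2).sub_const 1
    have h2 := ((h1.mul (hde z)).const_add 1)
    exact h2.congr_deriv (by ring)
  have hdF : ∀ z : ℝ, HasDerivAt (fun w : ℝ => w * (Real.exp (2*w) + 1) - (Real.exp (2*w) - 1))
      (1 + (2*z-1)*Real.exp (2*z)) z := by
    intro z
    have h2 := ((hasDerivAt_id' (x := z)).mul ((hde z).add_const 1)).sub ((hde z).sub_const 1)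
    exact h2.congr_deriv (by ring)
  have hF1pos : ∀ z : ℝ, 0 < z → 0 < 1 + (2*z-1)*Real.exp (2*z) := by
    intro z hz
    have hmono : StrictMonoOn (fun w : ℝ => 1 + (2*w-1)*Real.exp (2*w)) (Ici 0) := by
      apply strictMonoOn_of_deriv_pos (convex_Ici 0)
        (fun w _ => (hdF1 w).continuousAt.continuousWithinAt)
      intro w hw
      rw [interior_Ici] at hw
      rw [(hdF1 w).deriv]
      have := Real.exp_pos (2*w)
      have hw' : 0 < w := hw
      positivity
    have h := hmono (self_mem_Ici) (mem_Ici.mpr hz.le) hz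
    norm_num at h
    linarith
  have hmonoF : StrictMonoOn (fun w : ℝ => w * (Real.exp (2*w)+1) - (Real.exp (2*w) - 1))
      (Ici 0) := by
    apply strictMonoOn_of_deriv_pos (convex_Ici 0)
      (fun w _ => (hdF w).continuousAt.continuousWithinAt)
    intro w hw
    rw [interior_Ici] at hw
    rw [(hdF w).deriv]
    exact hF1pos w hw
  have h := hmonoF (self_mem_Ici) (mem_Ici.mpr hy.le) hy
  norm_num at h
  linarith

/-- `tanh y > y` for `y < 0`, in exponential form. -/
lemma tanh_gt {y : ℝ} (hy : y < 0) : y * (Real.exp (2*y) + 1) < Real.exp (2*y) - 1 := by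
  have h := tanh_lt (y := -y) (by linarith)
  have h2 : Real.exp (2 * -y) = (Real.exp (2*y))⁻¹ := by
    rw [show 2 * -y = -(2*y) by ring, Real.exp_neg]
  rw [h2] at h
  have hE : 0 < Real.exp (2*y) := Real.exp_pos _
  have hEE : Real.exp (2*y) * (Real.exp (2*y))⁻¹ = 1 := mul_inv_cancel₀ (ne_of_gt hE)
  nlinarith [h, hE, hEE]

/-- Quadratic key lemma, positive case. -/
lemma keyQuadPos {c t y : ℝ} (hc : 0 < c) (ht : c ≤ t) (hy : 0 < y) :
    0 < y * ((t-c)*(Real.exp y)^2 - t)^2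
      + c*((Real.exp y)^2 - 1)*((t-c)*(Real.exp y)^2 - t) + c^2*y*(Real.exp y)^2 := by
  set w := Real.exp y with hwdef
  have hw0 : 0 < w := Real.exp_pos y
  have hww : w^2 = Real.exp (2*y) := by
    rw [sq, ← Real.exp_add]; congr 1; ring
  have h2 : 1 + 2*y ≤ w^2 := by
    rw [hww]; linarith [Real.add_one_le_exp (2*y)]
  have htanh : w^2 - 1 < y*(w^2 + 1) := by
    rw [hww]; exact tanh_lt hy
  set D := (t-c)*w^2 - t with hD
  have hDc : -c ≤ D := by
    nlinarith [mul_nonneg (sub_nonneg.mpr ht) (show (0:ℝ) ≤ w^2 - 1 by linarith)]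
  have hsf : 0 ≤ y*(D - c) + c*(w^2 - 1) := by
    nlinarith [mul_nonneg hy.le (show (0:ℝ) ≤ D + c by linarith),
      mul_nonneg hc.le (show (0:ℝ) ≤ w^2 - 1 - 2*y by linarith)]
  have hfac : 0 ≤ (D + c)*(y*(D-c) + c*(w^2-1)) := mul_nonneg (by linarith) hsf
  have hPc : 0 < c^2*(y*(w^2+1) - (w^2-1)) := by
    apply mul_pos (by positivity); linarith
  nlinarith [hfac, hPc]

/-- Quadratic key lemma, negative case. -/
lemma keyQuadNeg {c t y : ℝ} (hc : 0 < c) (ht : c ≤ t) (hy : y < 0) :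
    y * ((t-c)*(Real.exp y)^2 - t)^2
      + c*((Real.exp y)^2 - 1)*((t-c)*(Real.exp y)^2 - t) + c^2*y*(Real.exp y)^2 < 0 := by
  set w := Real.exp y with hwdef
  have hw0 : 0 < w := Real.exp_pos y
  have hww : w^2 = Real.exp (2*y) := by
    rw [sq, ← Real.exp_add]; congr 1; ring
  have h2 : 1 + 2*y ≤ w^2 := by
    rw [hww]; linarith [Real.add_one_le_exp (2*y)]
  have hw1 : w^2 < 1 := by
    rw [hww]; exact Real.exp_lt_one_iff.mpr (by linarith)
  have htanh : y*(w^2 + 1) < w^2 - 1 := by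
    rw [hww]; exact tanh_gt hy
  set D := (t-c)*w^2 - t with hD
  have hDc : D ≤ -c := by
    nlinarith [mul_nonneg (sub_nonneg.mpr ht) (show (0:ℝ) ≤ 1 - w^2 by linarith)]
  have hsf : 0 ≤ y*(D - c) + c*(w^2 - 1) := by
    nlinarith [mul_nonneg (show (0:ℝ) ≤ -y by linarith) (show (0:ℝ) ≤ -(D + c) by linarith),
      mul_nonneg hc.le (show (0:ℝ) ≤ w^2 - 1 - 2*y by linarith)]
  have hfac : (D + c)*(y*(D-c) + c*(w^2-1)) ≤ 0 :=
    mul_nonpos_iff.mpr (Or.inr ⟨by linarith, hsf⟩)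
  have hPc : c^2*(y*(w^2+1) - (w^2-1)) < 0 :=
    mul_neg_of_pos_of_neg (by positivity) (by linarith)
  nlinarith [hfac, hPc]

/-- The function `t ↦ e^{tx} q_t(e^{cx})`, whose monotonicity in `t` encodes positivity of the
second derivative. -/
lemma rho_hasDerivAt (c x C : ℝ) (t : ℝ) :
    HasDerivAt (fun t : ℝ => Real.exp (t*x) * ((t-c)^2*C^2 - (2*t^2-2*t*c-c^2)*C + t^2))
      (Real.exp (t*x) * (x*((t-c)^2*C^2 - (2*t^2-2*t*c-c^2)*C + t^2)
        + (2*(t-c)*C^2 - (4*t-2*c)*C + 2*t))) t := by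
  have hexp : HasDerivAt (fun t : ℝ => Real.exp (t*x)) (x * Real.exp (t*x)) t := by
    have h : HasDerivAt (fun t : ℝ => t * x) (1 * x) t := (hasDerivAt_id' (x := t)).mul_const x
    have h2 := (Real.hasDerivAt_exp (t*x)).comp t h
    simp only [Function.comp_def, one_mul] at h2
    rw [mul_comm]
    exact h2
  have h1 : HasDerivAt (fun t : ℝ => (t-c)^2*C^2) (2*(t-c)*C^2) t := by
    have := (((hasDerivAt_id' (x := t)).sub_const c).pow 2).mul_const (C^2)
    exact this.congr_deriv (by push_cast; ring)
  have h2 : HasDerivAt (fun t : ℝ => (2*t^2-2*t*c-c^2)*C) ((4*t-2*c)*C) t := by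
    have hpoly : HasDerivAt (fun t : ℝ => 2*t^2-2*t*c-c^2) (4*t-2*c) t := by
      have := (((hasDerivAt_pow 2 t).const_mul 2).sub
        (((hasDerivAt_id' (x := t)).const_mul 2).mul_const c)).sub_const (c^2)
      exact this.congr_deriv (by push_cast; ring)
    exact hpoly.mul_const C
  have h3 : HasDerivAt (fun t : ℝ => t^2) (2*t) t := by
    simpa using hasDerivAt_pow 2 t
  have := hexp.mul ((h1.sub h2).add h3)
  exact this.congr_deriv (by simp only [Pi.mul_apply, Pi.sub_apply, Pi.add_apply]; ring)

/-- The numerator `Q` of the second derivative is positive for `x > 0`. -/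
lemma Qpos {a b c x : ℝ} (hab : b < a) (hbc : c ≤ b) (hc : 0 < c) (hx : 0 < x) :
    Real.exp (b*x) * ((b-c)^2*(Real.exp (c*x))^2 - (2*b^2-2*b*c-c^2)*(Real.exp (c*x)) + b^2)
    < Real.exp (a*x) * ((a-c)^2*(Real.exp (c*x))^2 - (2*a^2-2*a*c-c^2)*(Real.exp (c*x)) + a^2) := by
  set C := Real.exp (c*x) with hCdef
  have hww : C = (Real.exp (c*x/2))^2 := by
    rw [hCdef, sq, ← Real.exp_add]; congr 1; ring
  have hid : ∀ t : ℝ, x*((t-c)^2*C^2 - (2*t^2-2*t*c-c^2)*C + t^2)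
      + (2*(t-c)*C^2 - (4*t-2*c)*C + 2*t)
      = (2/c) * ((c*x/2) * ((t-c)*(Real.exp (c*x/2))^2 - t)^2
        + c*((Real.exp (c*x/2))^2 - 1)*((t-c)*(Real.exp (c*x/2))^2 - t)
        + c^2*(c*x/2)*(Real.exp (c*x/2))^2) := by
    intro t
    rw [hww]
    field_simp
    ring
  have hmono : StrictMonoOn
      (fun t : ℝ => Real.exp (t*x) * ((t-c)^2*C^2 - (2*t^2-2*t*c-c^2)*C + t^2)) (Ici c) := by
    apply strictMonoOn_of_deriv_pos (convex_Ici c)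
      (fun t _ => (rho_hasDerivAt c x C t).continuousAt.continuousWithinAt)
    intro t ht
    rw [interior_Ici] at ht
    rw [(rho_hasDerivAt c x C t).deriv]
    apply mul_pos (Real.exp_pos _)
    rw [hid t]
    exact mul_pos (by positivity) (keyQuadPos hc (le_of_lt ht) (by positivity))
  exact hmono (mem_Ici.mpr hbc) (mem_Ici.mpr (hbc.trans hab.le)) hab

/-- The numerator `Q` of the second derivative is negative for `x < 0`. -/
lemma Qneg {a b c x : ℝ} (hab : b < a) (hbc : c ≤ b) (hc : 0 < c) (hx : x < 0) :
    Real.exp (a*x) * ((a-c)^2*(Real.exp (c*x))^2 - (2*a^2-2*a*c-c^2)*(Real.exp (c*x)) + a^2)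
    < Real.exp (b*x) * ((b-c)^2*(Real.exp (c*x))^2 - (2*b^2-2*b*c-c^2)*(Real.exp (c*x)) + b^2) := by
  set C := Real.exp (c*x) with hCdef
  have hww : C = (Real.exp (c*x/2))^2 := by
    rw [hCdef, sq, ← Real.exp_add]; congr 1; ring
  have hid : ∀ t : ℝ, x*((t-c)^2*C^2 - (2*t^2-2*t*c-c^2)*C + t^2)
      + (2*(t-c)*C^2 - (4*t-2*c)*C + 2*t)
      = (2/c) * ((c*x/2) * ((t-c)*(Real.exp (c*x/2))^2 - t)^2
        + c*((Real.exp (c*x/2))^2 - 1)*((t-c)*(Real.exp (c*x/2))^2 - t)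
        + c^2*(c*x/2)*(Real.exp (c*x/2))^2) := by
    intro t
    rw [hww]
    field_simp
    ring
  have hanti : StrictAntiOn
      (fun t : ℝ => Real.exp (t*x) * ((t-c)^2*C^2 - (2*t^2-2*t*c-c^2)*C + t^2)) (Ici c) := by
    apply strictAntiOn_of_deriv_neg (convex_Ici c)
      (fun t _ => (rho_hasDerivAt c x C t).continuousAt.continuousWithinAt)
    intro t ht
    rw [interior_Ici] at ht
    rw [(rho_hasDerivAt c x C t).deriv]
    apply mul_neg_of_pos_of_neg (Real.exp_pos _)
    rw [hid t]
    apply mul_neg_of_pos_of_neg (by positivity)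
    apply keyQuadNeg hc (le_of_lt ht)
    have : c * x < 0 := mul_neg_of_pos_of_neg hc hx
    linarith
  exact hanti (mem_Ici.mpr hbc) (mem_Ici.mpr (hbc.trans hab.le)) hab

/-! ### The function and its derivatives away from zero -/

noncomputable def fF (a b c : ℝ) : ℝ → ℝ := fun x =>
  if x = 0 then (a - b) / c
  else (Real.exp (a * x) - Real.exp (b * x)) / (Real.exp (c * x) - 1)

noncomputable def f1 (a b c : ℝ) : ℝ → ℝ := fun x =>
  ((a * Real.exp (a*x) - b * Real.exp (b*x)) * (Real.exp (c*x) - 1)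
    - (Real.exp (a*x) - Real.exp (b*x)) * (c * Real.exp (c*x))) / (Real.exp (c*x) - 1)^2

noncomputable def f2 (a b c : ℝ) : ℝ → ℝ := fun x =>
  (Real.exp (a*x) * ((a-c)^2*(Real.exp (c*x))^2 - (2*a^2-2*a*c-c^2)*(Real.exp (c*x)) + a^2)
   - Real.exp (b*x) * ((b-c)^2*(Real.exp (c*x))^2 - (2*b^2-2*b*c-c^2)*(Real.exp (c*x)) + b^2))
   / (Real.exp (c*x) - 1)^3

lemma den_ne {c : ℝ} (hc : 0 < c) {x : ℝ} (hx : x ≠ 0) : Real.exp (c*x) - 1 ≠ 0 := by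
  rcases hx.lt_or_gt with h | h
  · have : Real.exp (c*x) < 1 := Real.exp_lt_one_iff.mpr (mul_neg_of_pos_of_neg hc h)
    linarith
  · have : 1 < Real.exp (c*x) := Real.one_lt_exp_iff.mpr (mul_pos hc h)
    linarith

lemma fF_hasDerivAt (a b : ℝ) {c : ℝ} (hc : 0 < c) {x : ℝ} (hx : x ≠ 0) :
    HasDerivAt (fF a b c) (f1 a b c x) x := by
  have hD := den_ne hc hx
  have hN : HasDerivAt (fun x : ℝ => Real.exp (a*x) - Real.exp (b*x))
      (a*Real.exp (a*x) - b*Real.exp (b*x)) x := (hasDerivAt_expMul a x).sub (hasDerivAt_expMul b x)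
  have hDn : HasDerivAt (fun x : ℝ => Real.exp (c*x) - 1) (c*Real.exp (c*x)) x :=
    (hasDerivAt_expMul c x).sub_const 1
  have h := hN.div hDn hD
  apply h.congr_of_eventuallyEq
  filter_upwards [isOpen_compl_singleton.mem_nhds hx] with z hz
  exact if_neg (by simpa using hz)

lemma f1_hasDerivAt (a b : ℝ) {c : ℝ} (hc : 0 < c) {x : ℝ} (hx : x ≠ 0) :
    HasDerivAt (f1 a b c) (f2 a b c x) x := by
  have hD := den_ne hc hx
  have hA := hasDerivAt_expMul a x
  have hB := hasDerivAt_expMul b x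
  have hC := hasDerivAt_expMul c x
  have hN' : HasDerivAt (fun x : ℝ => a*Real.exp (a*x) - b*Real.exp (b*x))
      (a*(a*Real.exp (a*x)) - b*(b*Real.exp (b*x))) x := (hA.const_mul a).sub (hB.const_mul b)
  have hDn : HasDerivAt (fun x : ℝ => Real.exp (c*x) - 1) (c*Real.exp (c*x)) x := hC.sub_const 1
  have hN : HasDerivAt (fun x : ℝ => Real.exp (a*x) - Real.exp (b*x))
      (a*Real.exp (a*x) - b*Real.exp (b*x)) x := hA.sub hB
  have hcC : HasDerivAt (fun x : ℝ => c*Real.exp (c*x)) (c*(c*Real.exp (c*x))) x := hC.const_mul c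
  have hU := (hN'.mul hDn).sub (hN.mul hcC)
  have hV : HasDerivAt (fun x : ℝ => (Real.exp (c*x) - 1)^2)
      (2*(Real.exp (c*x) - 1)*(c*Real.exp (c*x))) x := by
    have := hDn.pow 2
    exact this.congr_deriv (by push_cast; ring)
  have h := hU.div hV (pow_ne_zero 2 hD)
  refine h.congr_deriv ?_
  symm
  show f2 a b c x = _
  rw [f2]
  simp only [Pi.mul_apply, Pi.sub_apply]
  field_simp
  ring

lemma deriv2_eq (a b : ℝ) {c : ℝ} (hc : 0 < c) {x : ℝ} (hx : x ≠ 0) :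
    deriv (deriv (fF a b c)) x = f2 a b c x := by
  have hev : deriv (fF a b c) =ᶠ[𝓝 x] f1 a b c := by
    filter_upwards [isOpen_compl_singleton.mem_nhds hx] with z hz
    exact (fF_hasDerivAt a b hc (by simpa using hz)).deriv
  rw [Filter.EventuallyEq.deriv_eq hev]
  exact (f1_hasDerivAt a b hc hx).deriv

lemma f2_pos {a b c : ℝ} (hab : b < a) (hbc : c ≤ b) (hc : 0 < c) {x : ℝ} (hx : x ≠ 0) :
    0 < f2 a b c x := by
  rcases hx.lt_or_gt with h | h
  · have hQ := Qneg hab hbc hc h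
    have hden : Real.exp (c*x) - 1 < 0 := by
      have : Real.exp (c*x) < 1 := Real.exp_lt_one_iff.mpr (mul_neg_of_pos_of_neg hc h)
      linarith
    have hden3 : (Real.exp (c*x) - 1)^3 < 0 := by
      exact Odd.pow_neg (by decide) hden
    rw [f2]
    exact div_pos_of_neg_of_neg (by linarith) hden3
  · have hQ := Qpos hab hbc hc h
    have hden : 0 < Real.exp (c*x) - 1 := by
      have : 1 < Real.exp (c*x) := Real.one_lt_exp_iff.mpr (mul_pos hc h)
      linarith
    rw [f2]
    exact div_pos (by linarith) (by positivity)

/-! ### Behaviour at zero via the function `(e^y - 1)/y` -/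

noncomputable def Ef : ℝ → ℝ := fun y => if y = 0 then 1 else (Real.exp y - 1) / y

lemma Ef_zero : Ef 0 = 1 := if_pos rfl

lemma Ef_apply_ne {y : ℝ} (h : y ≠ 0) : Ef y = (Real.exp y - 1) / y := if_neg h

lemma Ef_pos (y : ℝ) : 0 < Ef y := by
  rcases eq_or_ne y 0 with h | h
  · rw [h, Ef_zero]; norm_num
  · rw [Ef_apply_ne h]
    rcases h.lt_or_gt with hy | hy
    · have h1 : Real.exp y < 1 := Real.exp_lt_one_iff.mpr hy
      exact div_pos_of_neg_of_neg (by linarith) hy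
    · have h1 : 1 < Real.exp y := Real.one_lt_exp_iff.mpr hy
      exact div_pos (by linarith) hy

lemma Ef_slope_bound {y : ℝ} (h0 : y ≠ 0) (h1 : |y| ≤ 1) : |(Ef y - 1)/y - 1/2| ≤ |y| := by
  have hb := Real.exp_bound h1 (by norm_num : 0 < 3)
  have hsum : ∑ m ∈ Finset.range 3, y^m / (Nat.factorial m) = 1 + y + y^2/2 := by
    rw [Finset.sum_range_succ, Finset.sum_range_succ, Finset.sum_range_succ,
      Finset.sum_range_zero]
    norm_num [Nat.factorial]
  rw [hsum] at hb
  have hb' : |Real.exp y - (1 + y + y^2/2)| ≤ |y|^3 * (2/9) := by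
    convert hb using 2
    norm_num [Nat.factorial]
  have hy2 : (0:ℝ) < y^2 := by positivity
  have heq : (Ef y - 1)/y - 1/2 = (Real.exp y - (1 + y + y^2/2))/y^2 := by
    rw [Ef_apply_ne h0]
    field_simp
    ring
  rw [heq, abs_div, abs_of_pos hy2]
  rw [div_le_iff₀ hy2]
  have h3 : |y|^3 = y^2 * |y| := by
    rw [show (3:ℕ) = 2 + 1 from rfl, pow_succ, sq_abs]
  nlinarith [hb', abs_nonneg y, hy2]

lemma Ef_hasDerivAt0 : HasDerivAt Ef (1/2 : ℝ) 0 := by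
  rw [hasDerivAt_iff_tendsto_slope]
  rw [← tendsto_sub_nhds_zero_iff]
  apply squeeze_zero_norm' (a := fun y : ℝ => |y|)
  · have h1 : ∀ᶠ y : ℝ in 𝓝[≠] (0:ℝ), |y| ≤ 1 := by
      apply Filter.Eventually.filter_mono nhdsWithin_le_nhds
      filter_upwards [Metric.closedBall_mem_nhds (0:ℝ) one_pos] with y hy
      simpa [Real.dist_eq] using hy
    filter_upwards [h1, self_mem_nhdsWithin] with y hy1 hy0
    have hy0' : y ≠ 0 := by simpa using hy0
    have hB := Ef_slope_bound hy0' hy1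
    rw [Real.norm_eq_abs, slope_def_field, Ef_zero]
    simpa [sub_zero] using hB
  · exact (continuous_abs.tendsto' 0 0 abs_zero).mono_left nhdsWithin_le_nhds

lemma fF_eq {a b c : ℝ} (hab : b < a) (hc : 0 < c) :
    fF a b c = fun x => ((a-b)/c) * (Real.exp (b*x) * (Ef ((a-b)*x) * (Ef (c*x))⁻¹)) := by
  funext x
  rcases eq_or_ne x 0 with hx | hx
  · subst hx
    simp [fF, Ef_zero]
  · have hD := den_ne hc hx
    have hab' : a - b ≠ 0 := sub_ne_zero.mpr (ne_of_gt hab)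
    have h1 : (a-b)*x ≠ 0 := mul_ne_zero hab' hx
    have h2 : c*x ≠ 0 := mul_ne_zero (ne_of_gt hc) hx
    rw [show fF a b c x = (Real.exp (a * x) - Real.exp (b * x)) / (Real.exp (c * x) - 1)
        from if_neg hx,
      Ef_apply_ne h1, Ef_apply_ne h2]
    have hA : Real.exp (a*x) = Real.exp ((a-b)*x) * Real.exp (b*x) := by
      rw [← Real.exp_add]; congr 1; ring
    rw [hA]
    have hE1 : Real.exp ((a-b)*x) - 1 ≠ 0 := den_ne (show (0:ℝ) < a - b by linarith) hx
    field_simp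

lemma fF_hasDerivAt0 {a b c : ℝ} (hab : b < a) (hc : 0 < c) :
    ∃ L, HasDerivAt (fF a b c) L 0 := by
  rw [fF_eq hab hc]
  have h1 : HasDerivAt (fun x : ℝ => Real.exp (b*x)) (b * Real.exp (b*0)) 0 :=
    hasDerivAt_expMul b 0
  have h2 : HasDerivAt (fun x : ℝ => Ef ((a-b)*x)) ((1/2) * (a-b)) 0 := by
    have hin : HasDerivAt (fun x : ℝ => (a-b)*x) (a-b) 0 := by
      simpa using (hasDerivAt_id' (x := (0:ℝ))).const_mul (a-b)
    have hout : HasDerivAt Ef (1/2 : ℝ) ((fun x : ℝ => (a-b)*x) 0) := by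
      simpa using Ef_hasDerivAt0
    simpa [Function.comp_def] using hout.comp 0 hin
  have h3 : HasDerivAt (fun x : ℝ => Ef (c*x)) ((1/2) * c) 0 := by
    have hin : HasDerivAt (fun x : ℝ => c*x) c 0 := by
      simpa using (hasDerivAt_id' (x := (0:ℝ))).const_mul c
    have hout : HasDerivAt Ef (1/2 : ℝ) ((fun x : ℝ => c*x) 0) := by
      simpa using Ef_hasDerivAt0
    simpa [Function.comp_def] using hout.comp 0 hin
  have h4 := h3.inv (ne_of_gt (Ef_pos (c*0)))
  exact ⟨_, ((h1.mul (h2.mul h4)).const_mul ((a-b)/c))⟩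

/-! ### Slope algebra helpers -/

lemma slope_mid_lt {f : ℝ → ℝ} {p q r : ℝ} (h1 : p < q) (h2 : q < r)
    (h : (f q - f p)/(q - p) < (f r - f q)/(r - q)) :
    (f q - f p)/(q - p) < (f r - f p)/(r - p) ∧
      (f r - f p)/(r - p) < (f r - f q)/(r - q) := by
  have d1 : 0 < q - p := by linarith
  have d2 : 0 < r - q := by linarith
  have d3 : 0 < r - p := by linarith
  rw [div_lt_div_iff₀ d1 d2] at h
  constructor
  · rw [div_lt_div_iff₀ d1 d3]; nlinarith
  · rw [div_lt_div_iff₀ d3 d2]; nlinarith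

theorem main (a b c : ℝ) (hab : a > b) (hbc : b ≥ c) (hc : c > 0) :
    StrictConvexOn ℝ Set.univ (fF a b c) := by
  have hab' : b < a := hab
  have hbc' : c ≤ b := hbc
  -- continuity
  obtain ⟨L, hL⟩ := fF_hasDerivAt0 hab' hc
  have hcont : Continuous (fF a b c) := by
    rw [continuous_iff_continuousAt]
    intro x
    rcases eq_or_ne x 0 with hx | hx
    · subst hx; exact hL.continuousAt
    · exact (fF_hasDerivAt a b hc hx).continuousAt
  -- strict convexity on each closed half-line
  have SCp : StrictConvexOn ℝ (Ici (0:ℝ)) (fF a b c) := by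
    apply strictConvexOn_of_deriv2_pos (convex_Ici 0) hcont.continuousOn
    intro x hx
    rw [interior_Ici] at hx
    have hx0 : x ≠ 0 := ne_of_gt hx
    show 0 < deriv (deriv (fF a b c)) x
    rw [deriv2_eq a b hc hx0]
    exact f2_pos hab' hbc' hc hx0
  have SCm : StrictConvexOn ℝ (Iic (0:ℝ)) (fF a b c) := by
    apply strictConvexOn_of_deriv2_pos (convex_Iic 0) hcont.continuousOn
    intro x hx
    rw [interior_Iic] at hx
    have hx0 : x ≠ 0 := ne_of_lt hx
    show 0 < deriv (deriv (fF a b c)) x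
    rw [deriv2_eq a b hc hx0]
    exact f2_pos hab' hbc' hc hx0
  set f := fF a b c with hfdef
  have hsl : Tendsto (slope f 0) (𝓝[≠] (0:ℝ)) (𝓝 L) := hasDerivAt_iff_tendsto_slope.mp hL
  -- the crucial inequality for chords crossing zero
  have cross : ∀ p r : ℝ, p < 0 → 0 < r →
      (f 0 - f p)/(0 - p) < (f r - f 0)/(r - 0) := by
    intro p r hp hr
    have hp2 : p < p/2 := by linarith
    have hp20 : p/2 < 0 := by linarith
    have hr2 : 0 < r/2 := by linarith
    have hr2r : r/2 < r := by linarith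
    -- s(p,0) < s(p/2,0)
    have hadjL := SCm.slope_strict_mono_adjacent (mem_Iic.mpr hp.le) (mem_Iic.mpr le_rfl)
      hp2 hp20
    have hL1 := (slope_mid_lt hp2 hp20 hadjL).2
    -- s(p/2,0) ≤ L
    have hL2 : (f 0 - f (p/2))/(0 - p/2) ≤ L := by
      have hsub : Iio (0:ℝ) ⊆ {(0:ℝ)}ᶜ := fun u hu => ne_of_lt hu
      apply ge_of_tendsto (hsl.mono_left (nhdsWithin_mono 0 hsub))
      filter_upwards [Ioo_mem_nhdsLT_of_mem (show (0:ℝ) ∈ Ioc (p/2) 0 from ⟨hp20, le_rfl⟩)]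
        with u hu
      have hadj2 := SCm.slope_strict_mono_adjacent (mem_Iic.mpr hp20.le) (mem_Iic.mpr le_rfl)
        hu.1 hu.2
      have h := (slope_mid_lt hu.1 hu.2 hadj2).2
      rw [slope_def_field]
      have hflip : (f u - f 0)/(u - 0) = (f 0 - f u)/(0 - u) := by
        rw [← neg_div_neg_eq]; ring_nf
      rw [hflip]
      linarith
    -- L ≤ s(0,r/2)
    have hR2 : L ≤ (f (r/2) - f 0)/(r/2 - 0) := by
      have hsub : Ioi (0:ℝ) ⊆ {(0:ℝ)}ᶜ := fun u hu => ne_of_gt hu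
      apply le_of_tendsto (hsl.mono_left (nhdsWithin_mono 0 hsub))
      filter_upwards [Ioo_mem_nhdsGT_of_mem (show (0:ℝ) ∈ Ico 0 (r/2) from ⟨le_rfl, hr2⟩)]
        with u hu
      have hadj2 := SCp.slope_strict_mono_adjacent (mem_Ici.mpr le_rfl) (mem_Ici.mpr hr2.le)
        hu.1 hu.2
      have h := (slope_mid_lt hu.1 hu.2 hadj2).1
      rw [slope_def_field]
      linarith
    -- s(0,r/2) < s(0,r)
    have hadjR := SCp.slope_strict_mono_adjacent (mem_Ici.mpr le_rfl) (mem_Ici.mpr hr.le)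
      hr2 hr2r
    have hR1 := (slope_mid_lt hr2 hr2r hadjR).1
    linarith
  -- assemble
  apply strictConvexOn_of_slope_strict_mono_adjacent convex_univ
  intro x y z _ _ hxy hyz
  rcases le_or_gt 0 x with hx0 | hx0
  · exact SCp.slope_strict_mono_adjacent (mem_Ici.mpr hx0)
      (mem_Ici.mpr (by linarith)) hxy hyz
  rcases le_or_gt z 0 with hz0 | hz0
  · exact SCm.slope_strict_mono_adjacent (mem_Iic.mpr (by linarith)) (mem_Iic.mpr hz0) hxy hyz
  rcases lt_trichotomy y 0 with hy0 | hy0 | hy0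
  · have h1 := SCm.slope_strict_mono_adjacent (mem_Iic.mpr hx0.le) (mem_Iic.mpr le_rfl)
      hxy hy0
    have h2 := cross y z hy0 hz0
    have h3 := (slope_mid_lt hy0 hz0 h2).1
    linarith
  · subst hy0
    exact cross x z hx0 hz0
  · have h2 := cross x y hx0 hy0
    have h3 := (slope_mid_lt hx0 hy0 h2).2
    have h1 := SCp.slope_strict_mono_adjacent (mem_Ici.mpr le_rfl)
      (mem_Ici.mpr (by linarith : (0:ℝ) ≤ z)) hy0 hyz
    linarith

end Stmt4Aux

theorem stmt4 (a b c : ℝ) (hab : a > b) (hbc : b ≥ c) (hc : c > 0) :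
    StrictConvexOn ℝ Set.univ (fun x : ℝ =>
      if x = 0 then (a - b) / c
      else (Real.exp (a * x) - Real.exp (b * x)) / (Real.exp (c * x) - 1)) := by
  exact Stmt4Aux.main a b c hab hbc hc
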